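/- Let x ≥ 1/(q_G − 1) = q_G. Then q_s(x) = 1/x + 1. -/

import Mathlib

open Filter Topology

noncomputable section

/-- The value `Σ_{i≥0} d i / q^(i+1)` of a (0-indexed) digit sequence `d` in base `q`;
this corresponds to `((d_i)_{i≥1})_q` with `d_i = d (i-1)`. -/
def seqVal (q : ℝ) (d : ℕ → ℕ) : ℝ := ∑' i : ℕ, (d i : ℝ) / q ^ (i + 1)

/-- `d` is a `q`-expansion of `x` with digits in `{0,1}`. -/
def IsExpansion (q x : ℝ) (d : ℕ → ℕ) : Prop :=
  (∀ i, d i ≤ 1) ∧ x = seqVal q d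

/-- `x` has a unique `q`-expansion. -/
def HasUniqueExpansion (q x : ℝ) : Prop := ∃! d : ℕ → ℕ, IsExpansion q x d

/-- The set `U(x)` of univoque bases of `x`. -/
def UBases (x : ℝ) : Set ℝ := {q | 1 < q ∧ q < 2 ∧ HasUniqueExpansion q x}

/-- `q_s(x) = inf U(x)`. -/
def qs (x : ℝ) : ℝ := sInf (UBases x)

/-- The univoque set `U_q` of `x ∈ [0, 1/(q-1)]` with a unique `q`-expansion. -/
def Uset (q : ℝ) : Set ℝ :=
  {x | x ∈ Set.Icc 0 (1 / (q - 1)) ∧ HasUniqueExpansion q x}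

/-- The set `U_q'` of digit sequences which are the unique `q`-expansion of their value. -/
def USeq (q : ℝ) : Set (ℕ → ℕ) :=
  {d | (∀ i, d i ≤ 1) ∧ ∀ e : ℕ → ℕ, IsExpansion q (seqVal q d) e → e = d}

/-- The Thue–Morse sequence: `τ 0 = 0`, `τ (2n) = τ n`, `τ (2n+1) = 1 - τ n`. -/
def IsThueMorse (τ : ℕ → ℕ) : Prop :=
  τ 0 = 0 ∧ (∀ n, τ (2 * n) = τ n) ∧ ∀ n, τ (2 * n + 1) = 1 - τ n

/-- `q` is the Komornik–Loreti constant: the base in `(1,2)` with `1 = Σ_{i≥1} τ_i q^{-i}`. -/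
def IsKL (τ : ℕ → ℕ) (q : ℝ) : Prop :=
  1 < q ∧ q < 2 ∧ (1 : ℝ) = ∑' i : ℕ, (τ (i + 1) : ℝ) / q ^ (i + 1)

/-- `Q` is the sequence of bases `q_n`: `Q 0 = 1` and for `n ≥ 1`, `Q n` is the root in
`(1,2)` of `1 = Σ_{i=1}^{2^n} τ_i q^{-i}`. -/
def IsBaseSeq (τ : ℕ → ℕ) (Q : ℕ → ℝ) : Prop :=
  Q 0 = 1 ∧ ∀ n, 1 ≤ n → 1 < Q n ∧ Q n < 2 ∧
    (1 : ℝ) = ∑ i ∈ Finset.range (2 ^ n), (τ (i + 1) : ℝ) / (Q n) ^ (i + 1)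

/-- `D_n = ⋃_{q ∈ (q_{n-1}, q_n]} U_q`. -/
def D (Q : ℕ → ℝ) (n : ℕ) : Set ℝ := ⋃ q ∈ Set.Ioc (Q (n - 1)) (Q n), Uset q

/-- The golden ratio. -/
def qG : ℝ := (1 + Real.sqrt 5) / 2

/-- Strict lexicographical order on digit sequences. -/
def seqLt (c d : ℕ → ℕ) : Prop := ∃ n, (∀ i, i < n → c i = d i) ∧ c n < d n

/-- The word `τ_1 ⋯ τ_m`. -/
def tmPrefix (τ : ℕ → ℕ) (m : ℕ) : List ℕ := (List.range m).map fun i => τ (i + 1)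

/-- `w⁻`: decrease the last digit of a word by 1. -/
def lastDec (w : List ℕ) : List ℕ := w.dropLast ++ [w.getLastD 0 - 1]

/-- `w⁺`: increase the last digit of a word by 1. -/
def lastInc (w : List ℕ) : List ℕ := w.dropLast ++ [w.getLastD 0 + 1]

/-- The reflection of a word. -/
def reflect (w : List ℕ) : List ℕ := w.map fun d => 1 - d

/-- The infinite sequence given by the prefix `p` followed by periodic repetition of `w`. -/
def prefPeriodic (p w : List ℕ) : ℕ → ℕ := fun j =>
  if j < p.length then p.getD j 0 else w.getD ((j - p.length) % w.length) 0

/-- `z_n = ((τ_1⋯τ_{2^{n-1}})(τ_{2^{n-1}+1}⋯τ_{2^n})^∞)_{q_n}`. -/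
def zVal (τ : ℕ → ℕ) (Q : ℕ → ℝ) (n : ℕ) : ℝ :=
  seqVal (Q n) (prefPeriodic (tmPrefix τ (2 ^ (n - 1)))
    ((List.range (2 ^ (n - 1))).map fun i => τ (2 ^ (n - 1) + (i + 1))))

/-- `z_{1,k} = Σ_{i=1}^k q_G^{-i} + 1/(q_G^k (q_G^2 - 1))`. -/
def z1 (k : ℕ) : ℝ :=
  (∑ i ∈ Finset.range k, 1 / qG ^ (i + 1)) + 1 / (qG ^ k * (qG ^ 2 - 1))

namespace QsAux

variable {q y x : ℝ} {d : ℕ → ℕ}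

lemma geom_summable (hq : 1 < q) : Summable (fun i : ℕ => (1/q) ^ (i+1)) := by
  have h0 : (0:ℝ) ≤ 1/q := by positivity
  have h1 : (1:ℝ)/q < 1 := by rw [div_lt_one (by linarith)]; linarith
  exact ((summable_geometric_of_lt_one h0 h1).mul_left (1/q)).congr (fun i => by ring)

lemma geom_tsum (hq : 1 < q) : ∑' i : ℕ, (1/q) ^ (i+1) = 1/(q-1) := by
  have h0 : (0:ℝ) ≤ 1/q := by positivity
  have h1 : (1:ℝ)/q < 1 := by rw [div_lt_one (by linarith)]; linarith
  have hq0 : q ≠ 0 := by linarith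
  have hq1 : q - 1 ≠ 0 := by intro h; rw [sub_eq_zero] at h; linarith
  calc ∑' i : ℕ, (1/q) ^ (i+1) = ∑' i : ℕ, (1/q) * (1/q)^i := tsum_congr (fun i => by ring)
    _ = (1/q) * (1 - 1/q)⁻¹ := by rw [tsum_mul_left, tsum_geometric_of_lt_one h0 h1]
    _ = 1/(q-1) := by rw [show (1:ℝ) - 1/q = (q-1)/q by field_simp]; field_simp

lemma summable_digits (hq : 1 < q) (hd : ∀ i, d i ≤ 1) :
    Summable (fun i : ℕ => (d i : ℝ) / q ^ (i + 1)) := by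
  refine Summable.of_nonneg_of_le (fun i => by positivity) (fun i => ?_) (geom_summable hq)
  have h1 : (d i : ℝ) ≤ 1 := by exact_mod_cast hd i
  rw [one_div_pow]
  gcongr

lemma seqVal_nonneg (hq : 0 < q) (d : ℕ → ℕ) : 0 ≤ seqVal q d :=
  tsum_nonneg fun i => by positivity

lemma seqVal_le (hq : 1 < q) (hd : ∀ i, d i ≤ 1) : seqVal q d ≤ 1/(q-1) := by
  rw [← geom_tsum hq]
  refine Summable.tsum_le_tsum (fun i => ?_) (summable_digits hq hd) (geom_summable hq)
  have h1 : (d i : ℝ) ≤ 1 := by exact_mod_cast hd i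
  rw [one_div_pow]
  gcongr

lemma seqVal_deficit (hq : 1 < q) (hd : ∀ i, d i ≤ 1) {n : ℕ} (hn : d n = 0) :
    seqVal q d ≤ 1/(q-1) - 1/q^(n+1) := by
  have hgs := geom_summable (q := q) hq
  have hits : Summable (fun i : ℕ => if i = n then 0 else (1/q)^(i+1)) := by
    refine Summable.of_nonneg_of_le (fun i => ?_) (fun i => ?_) hgs
    · split <;> positivity
    · split
      · positivity
      · exact le_rfl
  have hkey : ∑' i : ℕ, (1/q)^(i+1) = (1/q)^(n+1) + ∑' i : ℕ, (if i = n then 0 else (1/q)^(i+1)) :=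
    Summable.tsum_eq_add_tsum_ite hgs n
  have hle : seqVal q d ≤ ∑' i : ℕ, (if i = n then 0 else (1/q)^(i+1)) := by
    refine Summable.tsum_le_tsum (fun i => ?_) (summable_digits hq hd) hits
    by_cases h : i = n
    · simp only [h, if_pos rfl, hn]; simp
    · simp only [if_neg h]
      have h1 : (d i : ℝ) ≤ 1 := by exact_mod_cast hd i
      rw [one_div_pow]
      gcongr
  have : (1/q)^(n+1) = 1/q^(n+1) := one_div_pow _ _
  rw [geom_tsum hq] at hkey
  linarith

/-- Greedy remainders. -/
def gr (q y : ℝ) : ℕ → ℝ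
  | 0 => y
  | n+1 => if 1 ≤ q * gr q y n then q * gr q y n - 1 else q * gr q y n

/-- Greedy digits. -/
def gd (q y : ℝ) (n : ℕ) : ℕ := if 1 ≤ q * gr q y n then 1 else 0

lemma gd_le_one (q y : ℝ) (n : ℕ) : gd q y n ≤ 1 := by
  unfold gd; split <;> omega

lemma gr_succ (q y : ℝ) (n : ℕ) : gr q y (n+1) = q * gr q y n - gd q y n := by
  rw [gr, gd]; split <;> simp

lemma gr_mem (hq1 : 1 < q) (hq2 : q < 2) (hy0 : 0 ≤ y) (hy1 : y ≤ 1/(q-1)) :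
    ∀ n, 0 ≤ gr q y n ∧ gr q y n ≤ 1/(q-1)
  | 0 => ⟨hy0, hy1⟩
  | n+1 => by
      obtain ⟨h0, h1⟩ := gr_mem hq1 hq2 hy0 hy1 n
      have hq0 : (0:ℝ) < q := by linarith
      have hqd : (0:ℝ) < q - 1 := by linarith
      have hmax : q * gr q y n ≤ q * (1/(q-1)) := by gcongr
      have hid : q * (1/(q-1)) = 1/(q-1) + 1 := by field_simp; ring
      have hone : (1:ℝ) ≤ 1/(q-1) := by
        rw [le_div_iff₀ hqd]; linarith
      rw [gr]
      split_ifs with h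
      · exact ⟨by linarith, by linarith⟩
      · push_neg at h
        exact ⟨by positivity, by linarith⟩

lemma gr_partial (hq1 : 1 < q) (y : ℝ) :
    ∀ n, y = (∑ i ∈ Finset.range n, (gd q y i : ℝ)/q^(i+1)) + gr q y n / q^n
  | 0 => by simp [gr]
  | n+1 => by
      have hqn : (q:ℝ)^(n+1) ≠ 0 := by positivity
      have hqn' : (q:ℝ)^n ≠ 0 := by positivity
      have key : gr q y n / q^n = (gd q y n : ℝ)/q^(n+1) + (q * gr q y n - (gd q y n : ℝ))/q^(n+1) := by
        rw [← add_div]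
        rw [show (gd q y n : ℝ) + (q * gr q y n - (gd q y n : ℝ)) = q * gr q y n by ring]
        rw [pow_succ]
        field_simp
      calc y = (∑ i ∈ Finset.range n, (gd q y i : ℝ)/q^(i+1)) + gr q y n / q^n :=
            gr_partial hq1 y n
        _ = _ := by rw [Finset.sum_range_succ, gr_succ, key]; ring

lemma greedy_isExpansion (hq1 : 1 < q) (hq2 : q < 2) (hy0 : 0 ≤ y) (hy1 : y ≤ 1/(q-1)) :
    IsExpansion q y (gd q y) := by
  refine ⟨gd_le_one q y, ?_⟩
  have hs : Summable (fun i : ℕ => (gd q y i : ℝ)/q^(i+1)) :=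
    summable_digits hq1 (gd_le_one q y)
  have h1 : Tendsto (fun n => ∑ i ∈ Finset.range n, (gd q y i : ℝ)/q^(i+1)) atTop
      (𝓝 (seqVal q (gd q y))) := hs.hasSum.tendsto_sum_nat
  have h0q : (0:ℝ) < q := by linarith
  have htz : Tendsto (fun n : ℕ => gr q y n / q^n) atTop (𝓝 0) := by
    have hb : Tendsto (fun n : ℕ => (1/(q-1)) * (1/q)^n) atTop (𝓝 0) := by
      have := (tendsto_pow_atTop_nhds_zero_of_lt_one (by positivity)
        (by rw [div_lt_one h0q]; linarith : (1:ℝ)/q < 1)).const_mul (1/(q-1))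
      simpa using this
    refine squeeze_zero (fun n => ?_) (fun n => ?_) hb
    · have := (gr_mem hq1 hq2 hy0 hy1 n).1; positivity
    · have h := (gr_mem hq1 hq2 hy0 hy1 n).2
      rw [div_eq_mul_inv, ← one_div, ← one_div_pow]
      have hp : (0:ℝ) ≤ (1/q)^n := by positivity
      exact mul_le_mul_of_nonneg_right h hp
  have h2 : Tendsto (fun n => ∑ i ∈ Finset.range n, (gd q y i : ℝ)/q^(i+1)) atTop (𝓝 y) := by
    have heq : ∀ n, ∑ i ∈ Finset.range n, (gd q y i : ℝ)/q^(i+1) = y - gr q y n / q^n := by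
      intro n; have := gr_partial hq1 y n; linarith
    rw [tendsto_congr heq]
    simpa using tendsto_const_nhds.sub htz
  exact (tendsto_nhds_unique h1 h2).symm

/-- Tail value `((d_n d_{n+1} ...))_q`. -/
def tl (q : ℝ) (d : ℕ → ℕ) (n : ℕ) : ℝ := seqVal q (fun i => d (i + n))

lemma tl_nonneg (hq : 1 < q) (d : ℕ → ℕ) (n : ℕ) : 0 ≤ tl q d n :=
  seqVal_nonneg (by linarith) _

lemma tl_le (hq : 1 < q) (hd : ∀ i, d i ≤ 1) (n : ℕ) : tl q d n ≤ 1/(q-1) :=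
  seqVal_le hq (fun i => hd _)

lemma shift_tsum (hq : 1 < q) (hd : ∀ i, d i ≤ 1) (n : ℕ) :
    ∑' i : ℕ, (d (i + n) : ℝ) / q ^ ((i + n) + 1) = tl q d n / q^n := by
  have hqn : (q:ℝ)^n ≠ 0 := by positivity
  rw [tl, seqVal, ← tsum_div_const]
  refine tsum_congr (fun i => ?_)
  rw [show (i + n) + 1 = (i+1) + n by ring, pow_add, div_div]

lemma tl_eq (hq : 1 < q) (hd : ∀ i, d i ≤ 1) (n : ℕ) :
    seqVal q d = (∑ i ∈ Finset.range n, (d i : ℝ)/q^(i+1)) + tl q d n / q^n := by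
  have hs := summable_digits hq hd
  have h := Summable.sum_add_tsum_nat_add (f := fun i : ℕ => (d i : ℝ)/q^(i+1)) n hs
  rw [shift_tsum hq hd n] at h
  rw [seqVal, ← h]

lemma tl_rec (hq : 1 < q) (hd : ∀ i, d i ≤ 1) (n : ℕ) :
    tl q d n = ((d n : ℝ) + tl q d (n+1)) / q := by
  have hq0 : q ≠ 0 := by linarith
  have hs : Summable (fun i : ℕ => (d (i + n) : ℝ)/q^(i+1)) :=
    summable_digits hq (fun i => hd _)
  rw [tl, seqVal, Summable.tsum_eq_zero_add hs]
  have h1 : ∑' i : ℕ, (d ((i+1) + n) : ℝ)/q^((i+1)+1) = tl q d (n+1) / q := by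
    rw [tl, seqVal, ← tsum_div_const]
    refine tsum_congr (fun i => ?_)
    rw [show (i+1) + n = i + (n+1) by ring, show (i+1)+1 = (i+1)+1 from rfl, pow_succ, div_div]
  rw [h1]
  rw [pow_one]
  ring

lemma digit_forced0 (hq : 1 < q) (hd : ∀ i, d i ≤ 1) {n : ℕ} (h : tl q d n < 1/q) :
    d n = 0 := by
  have hq0 : (0:ℝ) < q := by linarith
  by_contra hne
  have hdn : d n = 1 := by have := hd n; omega
  have hrec := tl_rec hq hd n
  have ht := tl_nonneg hq d (n+1)
  rw [hdn] at hrec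
  rw [hrec, div_lt_div_iff₀ hq0 hq0] at h
  push_cast at h
  nlinarith

lemma digit_forced1 (hq : 1 < q) (hd : ∀ i, d i ≤ 1) {n : ℕ}
    (h : 1/(q*(q-1)) < tl q d n) : d n = 1 := by
  have hq0 : (0:ℝ) < q := by linarith
  have hqd : (0:ℝ) < q - 1 := by linarith
  by_contra hne
  have hdn : d n = 0 := by have := hd n; omega
  have hrec := tl_rec hq hd n
  have ht := tl_le hq hd (n+1)
  rw [hdn] at hrec
  push_cast at hrec
  rw [hrec] at h
  rw [div_lt_div_iff₀ (by positivity) hq0] at h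
  rw [le_div_iff₀ hqd] at ht
  nlinarith

lemma not_unique_of_overlap (hq1 : 1 < q) (hq2 : q < 2) {x : ℝ} {d : ℕ → ℕ}
    (hd : IsExpansion q x d) {n : ℕ}
    (h1 : 1/q ≤ tl q d n) (h2 : tl q d n ≤ 1/(q*(q-1))) :
    ¬ HasUniqueExpansion q x := by
  obtain ⟨hdig, hval⟩ := hd
  have hq0 : (0:ℝ) < q := by linarith
  have hqd : (0:ℝ) < q - 1 := by linarith
  set b : ℕ := 1 - d n with hb
  have hbR : (b:ℝ) ≤ 1 := by
    have hble : b ≤ 1 := by omega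
    exact_mod_cast hble
  have hbR0 : (0:ℝ) ≤ b := by positivity
  set y' : ℝ := q * tl q d n - b with hy'
  have hqt1 : 1 ≤ q * tl q d n := by
    rw [div_le_iff₀ hq0] at h1; linarith
  have hqt2 : q * tl q d n ≤ 1/(q-1) := by
    have := mul_le_mul_of_nonneg_left h2 (le_of_lt hq0)
    have heq : q * (1/(q*(q-1))) = 1/(q-1) := by field_simp
    linarith
  have hy0 : 0 ≤ y' := by rw [hy']; linarith
  have hy1 : y' ≤ 1/(q-1) := by rw [hy']; linarith
  set e : ℕ → ℕ := fun j => if j < n then d j else if j = n then b else gd q y' (j - (n+1))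
    with he
  have hedig : ∀ j, e j ≤ 1 := by
    intro j
    rw [he]
    dsimp only
    split_ifs with hj1 hj2
    · exact hdig j
    · omega
    · exact gd_le_one _ _ _
  have hgreedy := greedy_isExpansion (q := q) (y := y') hq1 hq2 hy0 hy1
  have hetail : tl q e (n+1) = y' := by
    rw [tl]
    have hfun : (fun i => e (i + (n+1))) = gd q y' := by
      funext i
      rw [he]
      dsimp only
      rw [if_neg (by omega), if_neg (by omega)]
      congr 1
      omega
    rw [hfun]
    exact hgreedy.2.symm
  have heval : seqVal q e = x := by
    have hstep := tl_eq hq1 hedig (n+1)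
    have hpre : ∑ j ∈ Finset.range (n+1), (e j : ℝ)/q^(j+1)
        = (∑ j ∈ Finset.range n, (d j : ℝ)/q^(j+1)) + (b:ℝ)/q^(n+1) := by
      rw [Finset.sum_range_succ]
      congr 1
      · refine Finset.sum_congr rfl (fun j hj => ?_)
        rw [he]
        dsimp only
        rw [if_pos (Finset.mem_range.mp hj)]
      · rw [he]
        dsimp only
        rw [if_neg (by omega), if_pos rfl]
    have hdx := tl_eq hq1 hdig n
    rw [← hval] at hdx
    have halg : (b:ℝ)/q^(n+1) + y'/q^(n+1) = tl q d n / q^n := by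
      rw [← add_div, hy']
      rw [show (b:ℝ) + (q * tl q d n - b) = q * tl q d n by ring, pow_succ]
      have hqn : (q:ℝ)^n ≠ 0 := by positivity
      field_simp
    rw [hstep, hetail, hpre, hdx]
    linarith
  intro hu
  obtain ⟨u, _, huq⟩ := hu
  have h₁ : e = u := huq e ⟨hedig, heval.symm⟩
  have h₂ : d = u := huq d ⟨hdig, hval⟩
  have hcontra : e n = d n := by rw [h₁, h₂]
  have hen : e n = b := by
    rw [he]; dsimp only; rw [if_neg (by omega), if_pos rfl]
  have hd1 := hdig n
  omega

lemma not_unique_lt_golden (hq1 : 1 < q) (hqsq : q^2 ≤ q + 1) (hq2 : q < 2)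
    {x : ℝ} (hx0 : 0 < x) (hxlt : x < 1/(q-1)) :
    ¬ HasUniqueExpansion q x := by
  have hq0 : (0:ℝ) < q := by linarith
  have hqd : (0:ℝ) < q - 1 := by linarith
  intro hu
  obtain ⟨d, hd, huniq⟩ := hu
  obtain ⟨hdig, hval⟩ := hd
  by_cases hov : ∃ n, 1/q ≤ tl q d n ∧ tl q d n ≤ 1/(q*(q-1))
  · obtain ⟨n, h1, h2⟩ := hov
    exact not_unique_of_overlap hq1 hq2 ⟨hdig, hval⟩ h1 h2 ⟨d, ⟨hdig, hval⟩, huniq⟩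
  · push_neg at hov
    -- ∀ n, 1/q ≤ tl → 1/(q(q-1)) < tl
    have hdich : ∀ n, tl q d n < 1/q ∨ 1/(q*(q-1)) < tl q d n := by
      intro n
      by_cases h : tl q d n < 1/q
      · exact Or.inl h
      · exact Or.inr (hov n (le_of_not_gt h))
    have hA1 : (1:ℝ) ≤ 1/(q*(q-1)) := by
      rw [le_div_iff₀ (by positivity)]
      nlinarith
    -- propagation: low stays low, high stays high
    have hlow : ∀ n, tl q d n < 1/q → tl q d (n+1) < 1/q := by
      intro n hn
      have hd0 : d n = 0 := digit_forced0 hq1 hdig hn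
      have hrec := tl_rec hq1 hdig n
      rw [hd0] at hrec
      push_cast at hrec
      have ht1 : tl q d (n+1) = q * tl q d n := by
        rw [hrec]; field_simp; ring
      have hlt1 : tl q d (n+1) < 1 := by
        rw [ht1]
        calc q * tl q d n < q * (1/q) := by
              exact mul_lt_mul_of_pos_left hn hq0
          _ = 1 := by field_simp
      rcases hdich (n+1) with h | h
      · exact h
      · linarith
    have hhigh : ∀ n, 1/(q*(q-1)) < tl q d n → 1/(q*(q-1)) < tl q d (n+1) := by
      intro n hn
      have hd1 : d n = 1 := digit_forced1 hq1 hdig hn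
      have hrec := tl_rec hq1 hdig n
      rw [hd1] at hrec
      push_cast at hrec
      have ht1 : tl q d (n+1) = q * tl q d n - 1 := by
        rw [hrec]; field_simp; ring
      have hkey : (2 - q)/(q-1) < tl q d (n+1) := by
        rw [ht1]
        have : q * (1/(q*(q-1))) < q * tl q d n := mul_lt_mul_of_pos_left hn hq0
        have heq : q * (1/(q*(q-1))) = 1/(q-1) := by field_simp
        have heq2 : (1:ℝ)/(q-1) - 1 = (2-q)/(q-1) := by field_simp; ring
        linarith
      have hge : 1/q ≤ (2 - q)/(q-1) := by
        rw [div_le_div_iff₀ hq0 hqd]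
        nlinarith
      rcases hdich (n+1) with h | h
      · linarith
      · exact h
    rcases hdich 0 with h0 | h0
    · -- all low ⇒ all digits zero ⇒ x = 0
      have hallP : ∀ n, tl q d n < 1/q := by
        intro n; induction n with
        | zero => exact h0
        | succ k ih => exact hlow k ih
      have hall0 : ∀ n, d n = 0 := fun n => digit_forced0 hq1 hdig (hallP n)
      have : x = 0 := by
        rw [hval, seqVal]
        have : ∀ i : ℕ, (d i : ℝ)/q^(i+1) = 0 := by
          intro i; rw [hall0 i]; simp
        rw [tsum_congr this, tsum_zero]
      linarith
    · -- all high ⇒ all digits one ⇒ x = 1/(q-1)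
      have hallQ : ∀ n, 1/(q*(q-1)) < tl q d n := by
        intro n; induction n with
        | zero => exact h0
        | succ k ih => exact hhigh k ih
      have hall1 : ∀ n, d n = 1 := fun n => digit_forced1 hq1 hdig (hallQ n)
      have : x = 1/(q-1) := by
        rw [hval, seqVal, ← geom_tsum hq1]
        refine tsum_congr (fun i => ?_)
        rw [hall1 i, one_div_pow]
        simp
      linarith

lemma sqrt5_sq : Real.sqrt 5 ^ 2 = 5 := Real.sq_sqrt (by norm_num)

lemma one_lt_qG : 1 < qG := by
  have h := sqrt5_sq
  have h2 : (1:ℝ) ≤ Real.sqrt 5 := by nlinarith [Real.sqrt_nonneg 5]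
  rw [qG]; nlinarith

lemma qG_lt_two : qG < 2 := by
  have h := sqrt5_sq
  have h2 : Real.sqrt 5 < 3 := by nlinarith [Real.sqrt_nonneg 5]
  rw [qG]; linarith

lemma qG_sq : qG^2 = qG + 1 := by
  have h := sqrt5_sq
  rw [qG]; nlinarith

lemma sq_le_of_le_qG {q : ℝ} (h : q ≤ qG) (h1 : 1 < q) : q^2 ≤ q + 1 := by
  have hG := qG_sq
  have hG1 := one_lt_qG
  nlinarith [mul_nonneg (sub_nonneg.mpr h) (by linarith : (0:ℝ) ≤ q + qG - 1)]

end QsAux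

open QsAux

/-- For `x ≥ 1/(q_G - 1) = q_G`, `q_s(x) = 1/x + 1`. -/
theorem qs_eq_of_ge_golden (x : ℝ) (hx : qG ≤ x) :
    qs x = 1 / x + 1 := by
  have hG1 := one_lt_qG
  have hG2 := qG_lt_two
  have hGsq := qG_sq
  have hx1 : 1 < x := lt_of_lt_of_le hG1 hx
  have hx0 : 0 < x := by linarith
  set q₀ : ℝ := 1/x + 1 with hq₀
  have hix : 0 < 1/x := by positivity
  have hix1 : 1/x < 1 := by rw [div_lt_one hx0]; linarith
  have hq₀1 : 1 < q₀ := by rw [hq₀]; linarith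
  have hq₀2 : q₀ < 2 := by rw [hq₀]; linarith
  have hq₀G : q₀ ≤ qG := by
    have h1 : 1/x ≤ 1/qG := by gcongr
    have h2 : 1/qG = qG - 1 := by
      rw [div_eq_iff (by linarith : qG ≠ 0)]
      nlinarith
    rw [hq₀]; linarith
  have hq₀sub : q₀ - 1 = 1/x := by rw [hq₀]; ring
  have hxeq : 1/(q₀-1) = x := by rw [hq₀sub, one_div_one_div]
  have hUB : UBases x = {q₀} := by
    ext q
    simp only [Set.mem_singleton_iff]
    constructor
    · rintro ⟨hq1, hq2, hu⟩
      by_contra hne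
      rcases lt_or_gt_of_ne hne with hlt | hgt
      · -- q < q₀ : no unique expansion below
        have hqd : (0:ℝ) < q - 1 := by linarith
        have hxlt : x < 1/(q-1) := by
          rw [← hxeq]
          have : q - 1 < q₀ - 1 := by linarith
          gcongr
        exact not_unique_lt_golden hq1
          (sq_le_of_le_qG (by linarith : q ≤ qG) hq1) hq2 hx0 hxlt hu
      · -- q > q₀ : no expansion at all
        obtain ⟨d, ⟨hdig, hval⟩, _⟩ := hu
        have hle : seqVal q d ≤ 1/(q-1) := seqVal_le hq1 hdig
        have hlt : 1/(q-1) < x := by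
          rw [← hxeq]
          have h1 : q₀ - 1 < q - 1 := by linarith
          gcongr
        rw [← hval] at hle
        linarith
    · rintro rfl
      refine ⟨hq₀1, hq₀2, ?_⟩
      refine ⟨fun _ => 1, ⟨fun i => le_refl 1, ?_⟩, ?_⟩
      · -- x = seqVal q₀ (all ones)
        rw [seqVal]
        have : ∀ i : ℕ, ((1:ℕ) : ℝ)/q₀^(i+1) = (1/q₀)^(i+1) := by
          intro i; rw [one_div_pow]; norm_num
        rw [tsum_congr this, geom_tsum hq₀1, hxeq]
      · -- uniqueness
        intro e ⟨hedig, heval⟩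
        funext i
        by_contra hne
        have hei : e i = 0 := by have := hedig i; omega
        have hdef := seqVal_deficit hq₀1 hedig hei
        have hpow : (0:ℝ) < 1/q₀^(i+1) := by positivity
        rw [← heval, ← hxeq] at hdef
        linarith
  rw [qs, hUB, csInf_singleton]
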